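/- Let (X_i)_{i≥1} be i.i.d. real random variables with mean μ > 0, V_n = X_1 + ... + X_n, and (ξ_n)_{n≥0} an identically distributed sequence with E[ξ_0^+] < ∞ and P(ξ_0 > -∞) > 0 with the ξ_n independent across n (or at least such that P(2ξ_0 < -εn)^{(ε/2)n - 1} is summable). Define τ(t) = inf{k ≥ 0 : V_k + ξ_k > t}. Then τ(t)/t → 1/μ almost surely as t → ∞. -/

import Mathlib

open MeasureTheory ProbabilityTheory Real Filter Set
open Topology

set_option maxHeartbeats 2000000 in
lemma det_aux {S Z : ℕ → ℝ} {m c : ℝ} (hm : 0 < m) (hc : 0 < c)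
    (hS : Tendsto (fun n : ℕ => S n / n) atTop (𝓝 m))
    (hZ : Tendsto (fun n : ℕ => max (Z n) 0 / n) atTop (𝓝 0))
    (hwin : ∀ j : ℕ, ∀ᶠ n : ℕ in atTop,
      ∃ k : ℕ, n ≤ k ∧ (k : ℝ) ≤ n + (n : ℝ) / ((j : ℝ) + 1) + 1 ∧ -c ≤ Z k) :
    Tendsto (fun t : ℝ => ((sInf {k : ℕ | t < S k + Z k} : ℕ) : ℝ) / t) atTop (𝓝 (1 / m)) := by
  rw [Metric.tendsto_nhds]
  intro ε hε
  -- choose a small e > 0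
  obtain ⟨e, hA, hB, hem, he0⟩ :
      ∃ e : ℝ, (1 + e) / (m - e) < 1 / m + ε / 2 ∧ 1 / m - ε / 2 < 1 / (m + 2 * e)
        ∧ e < m ∧ 0 < e := by
    have h1 : Tendsto (fun e : ℝ => (1 + e) / (m - e)) (𝓝 0) (𝓝 (1 / m)) := by
      have := Filter.Tendsto.div (f := fun e : ℝ => 1 + e) (g := fun e : ℝ => m - e)
        (tendsto_const_nhds.add tendsto_id) (tendsto_const_nhds.sub tendsto_id)
        (show m - 0 ≠ 0 by simpa using hm.ne')
      simpa [Pi.div_def] using this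
    have h2 : Tendsto (fun e : ℝ => 1 / (m + 2 * e)) (𝓝 0) (𝓝 (1 / m)) := by
      have h2' : Tendsto (fun e : ℝ => m + 2 * e) (𝓝 0) (𝓝 m) := by
        have hcont : Continuous (fun e : ℝ => m + 2 * e) := by continuity
        simpa using hcont.tendsto 0
      have := h2'.inv₀ hm.ne'
      simpa [one_div] using this
    have e1 : ∀ᶠ e in 𝓝 (0:ℝ), (1 + e) / (m - e) < 1 / m + ε / 2 :=
      h1.eventually_lt_const (by linarith)
    have e2 : ∀ᶠ e in 𝓝 (0:ℝ), 1 / m - ε / 2 < 1 / (m + 2 * e) :=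
      h2.eventually_const_lt (by linarith)
    have e3 : ∀ᶠ e in 𝓝 (0:ℝ), e < m := tendsto_id.eventually_lt_const hm
    have e4 : ∀ᶠ e in 𝓝[>] (0:ℝ), ((1 + e) / (m - e) < 1 / m + ε / 2
        ∧ 1 / m - ε / 2 < 1 / (m + 2 * e) ∧ e < m) ∧ 0 < e :=
      (((e1.and (e2.and e3)).filter_mono nhdsWithin_le_nhds).and self_mem_nhdsWithin)
    obtain ⟨e, ⟨p1, p2, p3⟩, p4⟩ := e4.exists
    exact ⟨e, p1, p2, p3, p4⟩
  obtain ⟨j, hj⟩ : ∃ j : ℕ, (1:ℝ) / ((j:ℝ) + 1) < e := by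
    obtain ⟨j, hj⟩ := exists_nat_one_div_lt he0
    exact ⟨j, by exact_mod_cast hj⟩
  have hme : 0 < m - e := by linarith
  -- eventual bounds in n
  have hSn : ∀ᶠ n : ℕ in atTop, (m - e) * n ≤ S n ∧ S n ≤ (m + e) * n := by
    filter_upwards [Metric.tendsto_nhds.mp hS e he0, eventually_ge_atTop 1] with n hn hn1
    rw [Real.dist_eq, abs_lt] at hn
    have hnp : (0:ℝ) < n := by exact_mod_cast hn1
    have hs : S n / n * n = S n := div_mul_cancel₀ _ hnp.ne'
    constructor <;> nlinarith [hn.1, hn.2, hs, hnp]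
  have hZn : ∀ᶠ n : ℕ in atTop, Z n ≤ e * n := by
    filter_upwards [Metric.tendsto_nhds.mp hZ e he0, eventually_ge_atTop 1] with n hn hn1
    rw [Real.dist_eq, sub_zero, abs_lt] at hn
    have hnp : (0:ℝ) < n := by exact_mod_cast hn1
    have hs : max (Z n) 0 / n * n = max (Z n) 0 := div_mul_cancel₀ _ hnp.ne'
    nlinarith [hn.2, hs, le_max_left (Z n) (0:ℝ), hnp]
  obtain ⟨N, hN⟩ := ((hSn.and hZn).and (hwin j)).exists_forall_of_atTop
  obtain ⟨C1, hC1⟩ : ∃ x : ℝ, x = ∑ i ∈ Finset.range N, |S i| := ⟨_, rfl⟩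
  obtain ⟨C2, hC2⟩ : ∃ x : ℝ, x = ∑ i ∈ Finset.range N, |Z i| := ⟨_, rfl⟩
  have hC1nn : 0 ≤ C1 := hC1 ▸ Finset.sum_nonneg fun _ _ => abs_nonneg _
  have hC2nn : 0 ≤ C2 := hC2 ▸ Finset.sum_nonneg fun _ _ => abs_nonneg _
  have hCS : ∀ k : ℕ, S k ≤ (m + e) * k + C1 := by
    intro k
    rcases le_or_gt N k with h | h
    · have := ((hN k h).1).1.2
      linarith
    · have h1 : S k ≤ |S k| := le_abs_self _
      have h2 : |S k| ≤ C1 := hC1 ▸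
        Finset.single_le_sum (f := fun i => |S i|) (fun _ _ => abs_nonneg _) (Finset.mem_range.2 h)
      have h3 : (0:ℝ) ≤ (m + e) * k := by positivity
      linarith
  have hCZ : ∀ k : ℕ, Z k ≤ e * k + C2 := by
    intro k
    rcases le_or_gt N k with h | h
    · have := ((hN k h).1).2
      linarith
    · have h1 : Z k ≤ |Z k| := le_abs_self _
      have h2 : |Z k| ≤ C2 := hC2 ▸
        Finset.single_le_sum (f := fun i => |Z i|) (fun _ _ => abs_nonneg _) (Finset.mem_range.2 h)
      have h3 : (0:ℝ) ≤ e * k := by positivity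
      linarith
  obtain ⟨C, hC⟩ : ∃ x : ℝ, x = C1 + C2 := ⟨_, rfl⟩
  obtain ⟨K, hK⟩ : ∃ x : ℝ, x = (1 + e) * ((c + 1) / (m - e) + N + 1) + 1 := ⟨_, rfl⟩
  -- upper eventual bound
  have key : ∀ᶠ t : ℝ in atTop, ({k : ℕ | t < S k + Z k}).Nonempty ∧
      ((sInf {k : ℕ | t < S k + Z k} : ℕ) : ℝ) ≤ (1 + e) / (m - e) * t + K := by
    filter_upwards [eventually_ge_atTop (0:ℝ)] with t ht
    obtain ⟨n, hndef⟩ : ∃ n : ℕ, n = ⌈(t + c + 1) / (m - e)⌉₊ + N := ⟨_, rfl⟩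
    have hnN : N ≤ n := hndef ▸ Nat.le_add_left _ _
    obtain ⟨k, hk1, hk2, hk3⟩ := (hN n hnN).2
    have hkN : N ≤ k := le_trans hnN hk1
    have hSk : (m - e) * k ≤ S k := ((hN k hkN).1).1.1
    have hx0 : (0:ℝ) ≤ (t + c + 1) / (m - e) := by positivity
    have hnx : (t + c + 1) / (m - e) ≤ (n : ℝ) := by
      rw [hndef]
      refine le_trans (Nat.le_ceil _) ?_
      exact_mod_cast Nat.cast_le.2 (Nat.le_add_right _ _)
    have h4 : t + c + 1 ≤ (m - e) * n := by
      rw [div_le_iff₀ hme] at hnx; linarith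
    have hkn : (n:ℝ) ≤ (k:ℝ) := Nat.cast_le.2 hk1
    have h5 : (m - e) * n ≤ (m - e) * k := by nlinarith
    have h6 : t < S k + Z k := by linarith
    refine ⟨⟨k, h6⟩, ?_⟩
    have h8 : ((sInf {k : ℕ | t < S k + Z k} : ℕ) : ℝ) ≤ (k : ℝ) :=
      Nat.cast_le.2 (Nat.sInf_le h6)
    have hnnn : (0:ℝ) ≤ (n:ℝ) := Nat.cast_nonneg _
    have h9 : (n : ℝ) / ((j:ℝ) + 1) ≤ e * n := by
      have hj1 : (0:ℝ) < (j:ℝ) + 1 := by positivity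
      have hrw : (n : ℝ) / ((j:ℝ) + 1) = (n : ℝ) * (1 / ((j:ℝ) + 1)) := by ring
      rw [hrw]
      calc (n:ℝ) * (1 / ((j:ℝ) + 1)) ≤ (n:ℝ) * e := mul_le_mul_of_nonneg_left hj.le hnnn
        _ = e * n := mul_comm _ _
    have h10 : (n : ℝ) ≤ (t + c + 1) / (m - e) + 1 + N := by
      have hcl : (⌈(t + c + 1) / (m - e)⌉₊ : ℝ) < (t + c + 1) / (m - e) + 1 :=
        Nat.ceil_lt_add_one hx0
      rw [hndef]
      push_cast
      linarith
    have h11 : (k : ℝ) ≤ (1 + e) * n + 1 := by linarith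
    have h12 : (1 + e) * (n:ℝ) ≤ (1 + e) * ((t + c + 1) / (m - e) + 1 + N) :=
      mul_le_mul_of_nonneg_left h10 (by linarith)
    have h13 : (1 + e) * ((t + c + 1) / (m - e) + 1 + N) + 1 = (1 + e) / (m - e) * t + K := by
      rw [hK]; field_simp; ring
    linarith
  -- lower tail
  have hlow : Tendsto (fun t : ℝ => (1 - C * t⁻¹) / (m + 2 * e)) atTop (𝓝 (1 / (m + 2 * e))) := by
    have h1 : Tendsto (fun t : ℝ => 1 - C * t⁻¹) atTop (𝓝 (1 - C * 0)) :=
      Tendsto.sub (tendsto_const_nhds : Tendsto (fun _ : ℝ => (1:ℝ)) atTop (𝓝 1))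
        (tendsto_inv_atTop_zero.const_mul C)
    have h := h1.div_const (m + 2 * e)
    rw [mul_zero, sub_zero] at h
    exact h
  have hlow2 : ∀ᶠ t : ℝ in atTop, 1 / m - ε / 2 < (1 - C * t⁻¹) / (m + 2 * e) :=
    hlow.eventually_const_lt hB
  have hup2 : ∀ᶠ t : ℝ in atTop, (1 + e) / (m - e) * t + K < (1 / m + ε) * t := by
    filter_upwards [eventually_gt_atTop (max 0 (K / (ε / 2)))] with t ht
    have ht0 : 0 < t := lt_of_le_of_lt (le_max_left _ _) ht
    have ht1 : K / (ε / 2) < t := lt_of_le_of_lt (le_max_right _ _) ht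
    have hε2 : (0:ℝ) < ε / 2 := by linarith
    have h1 : K < (ε / 2) * t := by
      rw [div_lt_iff₀ hε2] at ht1; linarith
    nlinarith [hA, ht0]
  filter_upwards [key, hlow2, hup2, eventually_gt_atTop (0:ℝ)] with t hkey hl hu ht0
  obtain ⟨hne, hτK⟩ := hkey
  obtain ⟨τ, hτ⟩ : ∃ x : ℕ, x = sInf {k : ℕ | t < S k + Z k} := ⟨_, rfl⟩
  rw [← hτ] at hτK
  rw [show ((sInf {k : ℕ | t < S k + Z k} : ℕ) : ℝ) / t = (τ:ℝ)/t from by rw [hτ]]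
  have hmem : t < S τ + Z τ := hτ ▸ Nat.sInf_mem hne
  have hm2e : (0:ℝ) < m + 2 * e := by linarith
  have hτlb : (t - C) / (m + 2 * e) < (τ : ℝ) := by
    have h1 : t < (m + 2 * e) * τ + C := by
      have := hCS τ; have := hCZ τ; nlinarith [hCS τ, hCZ τ]
    rw [div_lt_iff₀ hm2e]; linarith
  have heq : (t - C) / (m + 2 * e) / t = (1 - C * t⁻¹) / (m + 2 * e) := by
    field_simp
  have hlb : 1 / m - ε / 2 < (τ : ℝ) / t := by
    have h2 : (t - C) / (m + 2 * e) / t < (τ : ℝ) / t := by gcongr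
    rw [heq] at h2
    linarith
  have hub : (τ : ℝ) / t < 1 / m + ε := by
    rw [div_lt_iff₀ ht0]
    linarith
  rw [Real.dist_eq, abs_lt]
  constructor <;> linarith

set_option maxHeartbeats 2000000 in
/-- First-passage asymptotics: if `V_n` is a random walk with i.i.d. increments
of mean `μ ∈ (0,∞)` and `(ξ_n)` are i.i.d. perturbations with `E[ξ_0^+] < ∞`,
then `τ(t)/t → 1/μ` a.s. as `t → ∞`, where
`τ(t) = inf{k : V_k + ξ_k > t}`. -/
theorem stmt11 {Ω : Type*} [MeasurableSpace Ω] (μ : Measure Ω) [IsProbabilityMeasure μ]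
    (X : ℕ → Ω → ℝ) (ξ : ℕ → Ω → ℝ) (m : ℝ)
    (hXmeas : ∀ i, Measurable (X i))
    (hXindep : iIndepFun X μ)
    (hXid : ∀ i, IdentDistrib (X i) (X 0) μ μ)
    (hXint : Integrable (X 0) μ) (hmean : ∫ ω, X 0 ω ∂μ = m) (hm : 0 < m)
    (hξmeas : ∀ i, Measurable (ξ i))
    (hξindep : iIndepFun ξ μ)
    (hξid : ∀ i, IdentDistrib (ξ i) (ξ 0) μ μ)
    (hξint : Integrable (fun ω => max (ξ 0 ω) 0) μ) :
    ∀ᵐ ω ∂μ, Tendsto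
      (fun t : ℝ =>
        ((sInf {k : ℕ | t < (∑ i ∈ Finset.range k, X i ω) + ξ k ω} : ℕ) : ℝ) / t)
      atTop (nhds (1 / m)) := by
  -- (a) strong law of large numbers
  have hV : ∀ᵐ ω ∂μ, Tendsto (fun n : ℕ => (∑ i ∈ Finset.range n, X i ω) / n) atTop (𝓝 m) := by
    have h := strong_law_ae_real X hXint (fun i j hij => hXindep.indepFun hij) hXid
    rw [hmean] at h
    exact h
  -- (b) positive parts grow sublinearly
  have hZ0 : ∀ᵐ ω ∂μ, Tendsto (fun n : ℕ => max (ξ n ω) 0 / n) atTop (𝓝 0) := by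
    have A : ∀ j : ℕ, ∀ᵐ ω ∂μ, ∀ᶠ n : ℕ in atTop, max (ξ n ω) 0 ≤ (n : ℝ) / ((j:ℝ) + 1) := by
      intro j
      have hYmeas : Measurable fun x : ℝ => ((j:ℝ) + 1) * max x 0 :=
        (measurable_id.max measurable_const).const_mul _
      have hYint : Integrable (fun ω => ((j:ℝ) + 1) * max (ξ 0 ω) 0) μ := hξint.const_mul _
      have hsum : (∑' n : ℕ, μ {ω | ((j:ℝ) + 1) * max (ξ 0 ω) 0 ∈ Set.Ioi (n:ℝ)}) < ⊤ := by
        letI : MeasureSpace Ω := ⟨μ⟩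
        exact tsum_prob_mem_Ioi_lt_top hYint (fun ω => by positivity)
      have hAeq : ∀ n : ℕ, μ {ω | (n:ℝ) < ((j:ℝ) + 1) * max (ξ n ω) 0}
          = μ {ω | ((j:ℝ) + 1) * max (ξ 0 ω) 0 ∈ Set.Ioi (n:ℝ)} := by
        intro n
        have hid : IdentDistrib (fun ω => ((j:ℝ) + 1) * max (ξ n ω) 0)
            (fun ω => ((j:ℝ) + 1) * max (ξ 0 ω) 0) μ μ := (hξid n).comp hYmeas
        simpa [Set.preimage, Set.mem_Ioi] using hid.measure_mem_eq (measurableSet_Ioi (a := (n:ℝ)))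
      have hsum' : (∑' n : ℕ, μ {ω | (n:ℝ) < ((j:ℝ) + 1) * max (ξ n ω) 0}) ≠ ⊤ := by
        rw [tsum_congr hAeq]
        exact hsum.ne
      filter_upwards [ae_eventually_notMem hsum'] with ω hω
      filter_upwards [hω] with n hn
      have hj1 : (0:ℝ) < (j:ℝ) + 1 := by positivity
      have h1 : ¬ ((n:ℝ) < ((j:ℝ) + 1) * max (ξ n ω) 0) := hn
      rw [not_lt] at h1
      rw [le_div_iff₀ hj1, mul_comm]
      exact h1
    filter_upwards [ae_all_iff.2 A] with ω hω
    rw [Metric.tendsto_atTop]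
    intro ε hε
    obtain ⟨j, hj⟩ := exists_nat_one_div_lt hε
    obtain ⟨N, hNw⟩ := eventually_atTop.mp (hω j)
    refine ⟨max N 1, fun n hn => ?_⟩
    have h1 : N ≤ n := le_trans (le_max_left _ _) hn
    have h2 : 1 ≤ n := le_trans (le_max_right _ _) hn
    have hnp : (0:ℝ) < n := by exact_mod_cast h2
    have h3 := hNw n h1
    rw [Real.dist_eq, sub_zero, abs_of_nonneg (by positivity)]
    have hj1 : (0:ℝ) < (j:ℝ) + 1 := by positivity
    have h4 : max (ξ n ω) 0 / n ≤ 1 / ((j:ℝ) + 1) := by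
      calc max (ξ n ω) 0 / n ≤ ((n:ℝ) / ((j:ℝ) + 1)) / n := by gcongr
        _ = 1 / ((j:ℝ) + 1) := by field_simp
    linarith
  -- (c) choice of c
  obtain ⟨c, hc0, hq1⟩ : ∃ c : ℝ, 0 < c ∧ μ {ω | ξ 0 ω < -c} < 1 := by
    have hmeas : ∀ n : ℕ, MeasurableSet {ω | ξ 0 ω < -((n:ℝ) + 1)} := fun n =>
      measurableSet_lt (hξmeas 0) measurable_const
    have hmono : Antitone fun n : ℕ => {ω | ξ 0 ω < -((n:ℝ) + 1)} := by
      intro a b hab ω hω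
      simp only [Set.mem_setOf_eq] at *
      have : (a:ℝ) ≤ b := Nat.cast_le.2 hab
      linarith
    have hempty : (⋂ n : ℕ, {ω | ξ 0 ω < -((n:ℝ) + 1)}) = ∅ := by
      ext ω
      simp only [Set.mem_iInter, Set.mem_setOf_eq, Set.mem_empty_iff_false, iff_false,
        not_forall, not_lt]
      obtain ⟨n, hn⟩ := exists_nat_gt (-(ξ 0 ω) - 1)
      exact ⟨n, by linarith⟩
    have htend := tendsto_measure_iInter_atTop (μ := μ)
      (fun n => (hmeas n).nullMeasurableSet) hmono ⟨0, measure_ne_top μ _⟩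
    rw [hempty, measure_empty] at htend
    obtain ⟨n, hn⟩ := (htend.eventually_lt_const (show (0:ENNReal) < 1 by norm_num)).exists
    exact ⟨(n:ℝ) + 1, by positivity, hn⟩
  -- (c') window Borel-Cantelli
  have hwin : ∀ j : ℕ, ∀ᵐ ω ∂μ, ∀ᶠ n : ℕ in atTop,
      ∃ k : ℕ, n ≤ k ∧ (k:ℝ) ≤ n + (n:ℝ) / ((j:ℝ) + 1) + 1 ∧ -c ≤ ξ k ω := by
    intro j
    obtain ⟨r, hr0, hr1, hrq⟩ : ∃ r : ℝ, 0 ≤ r ∧ r < 1 ∧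
        ∀ k : ℕ, μ {ω | ξ k ω < -c} = ENNReal.ofReal r := by
      refine ⟨(μ {ω | ξ 0 ω < -c}).toReal, ENNReal.toReal_nonneg, ?_, ?_⟩
      · rw [← ENNReal.ofReal_one, ← ENNReal.ofReal_toReal (measure_ne_top μ _)] at hq1
        have := (ENNReal.ofReal_lt_ofReal_iff (by norm_num)).mp hq1
        simpa using this
      · intro k
        have hid := (hξid k).measure_mem_eq (measurableSet_Iio (a := -c))
        have hpre : ∀ i : ℕ, ξ i ⁻¹' Set.Iio (-c) = {ω | ξ i ω < -c} := fun _ => rfl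
        rw [hpre, hpre] at hid
        rw [hid, ENNReal.ofReal_toReal (measure_ne_top μ _)]
    have hB : ∀ n : ℕ,
        μ (⋂ k ∈ Finset.Ico n (n + (⌈(n:ℝ) / ((j:ℝ) + 1)⌉₊ + 1)), {ω | ξ k ω < -c})
          = ENNReal.ofReal (r ^ (⌈(n:ℝ) / ((j:ℝ) + 1)⌉₊ + 1)) := by
      intro n
      rw [hξindep.meas_biInter (s := fun k => {ω | ξ k ω < -c})
        (fun i _ => ⟨Set.Iio (-c), measurableSet_Iio, rfl⟩)]
      rw [Finset.prod_congr rfl (fun k _ => hrq k), Finset.prod_const, Nat.card_Ico,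
        ENNReal.ofReal_pow hr0]
      congr 1
      omega
    have hsummable : Summable (fun n : ℕ => r ^ (⌈(n:ℝ) / ((j:ℝ) + 1)⌉₊ + 1)) := by
      rcases eq_or_lt_of_le hr0 with h0 | h0
      · have : (fun n : ℕ => r ^ (⌈(n:ℝ) / ((j:ℝ) + 1)⌉₊ + 1)) = fun _ => 0 := by
          funext n
          rw [← h0]
          exact zero_pow (Nat.succ_ne_zero _)
        rw [this]
        exact summable_zero
      · have hρ0 : (0:ℝ) ≤ r ^ ((1:ℝ) / ((j:ℝ) + 1)) := Real.rpow_nonneg hr0 _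
        have hρ1 : r ^ ((1:ℝ) / ((j:ℝ) + 1)) < 1 := Real.rpow_lt_one hr0 hr1 (by positivity)
        refine Summable.of_nonneg_of_le (fun n => pow_nonneg hr0 _) (fun n => ?_)
          (summable_geometric_of_lt_one hρ0 hρ1)
        have h1 : ((n:ℝ) / ((j:ℝ) + 1)) ≤ ((⌈(n:ℝ) / ((j:ℝ) + 1)⌉₊ + 1 : ℕ) : ℝ) := by
          push_cast
          linarith [Nat.le_ceil ((n:ℝ) / ((j:ℝ) + 1))]
        calc r ^ (⌈(n:ℝ) / ((j:ℝ) + 1)⌉₊ + 1)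
            = r ^ (((⌈(n:ℝ) / ((j:ℝ) + 1)⌉₊ + 1 : ℕ) : ℝ)) := (Real.rpow_natCast r _).symm
          _ ≤ r ^ ((n:ℝ) / ((j:ℝ) + 1)) := Real.rpow_le_rpow_of_exponent_ge h0 hr1.le h1
          _ = (r ^ ((1:ℝ) / ((j:ℝ) + 1))) ^ (n:ℕ) := by
              rw [← Real.rpow_natCast (r ^ ((1:ℝ) / ((j:ℝ) + 1))) n, ← Real.rpow_mul hr0]
              congr 1
              push_cast
              ring
    have hsum' : (∑' n : ℕ,
        μ (⋂ k ∈ Finset.Ico n (n + (⌈(n:ℝ) / ((j:ℝ) + 1)⌉₊ + 1)), {ω | ξ k ω < -c})) ≠ ⊤ := by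
      rw [tsum_congr hB, ← ENNReal.ofReal_tsum_of_nonneg (fun n => pow_nonneg hr0 _) hsummable]
      exact ENNReal.ofReal_ne_top
    filter_upwards [ae_eventually_notMem hsum'] with ω hω
    filter_upwards [hω] with n hn
    simp only [Set.mem_iInter, Set.mem_setOf_eq, not_forall, not_lt] at hn
    obtain ⟨k, hk1, hk2⟩ := hn
    rw [Finset.mem_Ico] at hk1
    refine ⟨k, hk1.1, ?_, hk2⟩
    have h1 : (k:ℝ) ≤ (n:ℝ) + (⌈(n:ℝ) / ((j:ℝ) + 1)⌉₊ : ℝ) := by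
      have : k ≤ n + ⌈(n:ℝ) / ((j:ℝ) + 1)⌉₊ := by omega
      exact_mod_cast this
    have h2 : (⌈(n:ℝ) / ((j:ℝ) + 1)⌉₊ : ℝ) ≤ (n:ℝ) / ((j:ℝ) + 1) + 1 :=
      (Nat.ceil_lt_add_one (by positivity)).le
    linarith
  -- assemble
  filter_upwards [hV, hZ0, ae_all_iff.2 hwin] with ω hωV hωZ hωW
  exact det_aux hm hc0 hωV hωZ hωW
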